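/- Let α ∈ (0,1) and c ≥ ((2-α)/(1-α))·((1+α)/α). Then F(x) = x^α (c + sin(log x)) defined for x > 0 is positive, strictly increasing, and concave on (0,∞). -/

import Mathlib

open Set Filter Real

section Aux

variable {α c : ℝ}

lemma hasDerivAt_F (hα : α ∈ Set.Ioo (0:ℝ) 1) {x : ℝ} (hx : 0 < x) :
    HasDerivAt (fun x : ℝ => x ^ α * (c + Real.sin (Real.log x)))
      (x ^ (α - 1) * (α * c + α * Real.sin (Real.log x) + Real.cos (Real.log x))) x := by
  have h1 : HasDerivAt (fun x : ℝ => x ^ α) (α * x ^ (α - 1)) x :=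
    Real.hasDerivAt_rpow_const (Or.inl hx.ne')
  have h2 : HasDerivAt (fun x : ℝ => c + Real.sin (Real.log x))
      (Real.cos (Real.log x) * x⁻¹) x :=
    (((Real.hasDerivAt_sin (Real.log x)).comp x (Real.hasDerivAt_log hx.ne'))).const_add c
  have h := h1.mul h2
  convert h using 1
  rfl; rfl; rfl
  have hxpow : x ^ α * x⁻¹ = x ^ (α - 1) := by
    rw [Real.rpow_sub hx, Real.rpow_one, div_eq_mul_inv]
  rw [← hxpow]; ring

lemma hasDerivAt_G (hα : α ∈ Set.Ioo (0:ℝ) 1) {x : ℝ} (hx : 0 < x) :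
    HasDerivAt (fun x : ℝ => x ^ (α - 1) * (α * c + α * Real.sin (Real.log x) + Real.cos (Real.log x)))
      (x ^ (α - 2) * (α * (α - 1) * c + (α ^ 2 - α - 1) * Real.sin (Real.log x)
        + (2 * α - 1) * Real.cos (Real.log x))) x := by
  have h1 : HasDerivAt (fun x : ℝ => x ^ (α - 1)) ((α - 1) * x ^ (α - 1 - 1)) x :=
    Real.hasDerivAt_rpow_const (Or.inl hx.ne')
  have h2 : HasDerivAt (fun x : ℝ => α * c + α * Real.sin (Real.log x) + Real.cos (Real.log x))
      (α * (Real.cos (Real.log x) * x⁻¹) + (-Real.sin (Real.log x)) * x⁻¹) x := by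
    have hs : HasDerivAt (fun x : ℝ => Real.sin (Real.log x)) (Real.cos (Real.log x) * x⁻¹) x :=
      (Real.hasDerivAt_sin (Real.log x)).comp x (Real.hasDerivAt_log hx.ne')
    have hcos : HasDerivAt (fun x : ℝ => Real.cos (Real.log x)) ((-Real.sin (Real.log x)) * x⁻¹) x :=
      (Real.hasDerivAt_cos (Real.log x)).comp x (Real.hasDerivAt_log hx.ne')
    exact ((hs.const_mul α).const_add (α * c)).add hcos
  have h := h1.mul h2
  convert h using 1
  rfl; rfl; rfl
  have e1 : x ^ (α - 1 - 1) = x ^ (α - 2) := by rw [show α - 1 - 1 = α - 2 by ring]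
  have e2 : x ^ (α - 1) * x⁻¹ = x ^ (α - 2) := by
    rw [show α - 2 = α - 1 - 1 by ring, Real.rpow_sub hx (α-1) 1, Real.rpow_one, div_eq_mul_inv]
  rw [e1, ← e2]; ring

lemma key_ineq (hα : α ∈ Set.Ioo (0:ℝ) 1)
    (hc : ((2 - α) / (1 - α)) * ((1 + α) / α) ≤ c) :
    (2 - α) * (1 + α) ≤ c * ((1 - α) * α) := by
  obtain ⟨hα0, hα1⟩ := hα
  rw [div_mul_div_comm] at hc
  exact (div_le_iff₀ (by nlinarith)).1 hc

end Aux

theorem oscillating_F_concave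
    (α c : ℝ) (hα : α ∈ Set.Ioo (0 : ℝ) 1)
    (hc : ((2 - α) / (1 - α)) * ((1 + α) / α) ≤ c) :
    (∀ x > (0 : ℝ), 0 < x ^ α * (c + Real.sin (Real.log x))) ∧
    StrictMonoOn (fun x : ℝ => x ^ α * (c + Real.sin (Real.log x))) (Set.Ioi 0) ∧
    ConcaveOn ℝ (Set.Ioi 0) (fun x : ℝ => x ^ α * (c + Real.sin (Real.log x))) := by
  obtain ⟨hα0, hα1⟩ := hα
  have hkey := key_ineq ⟨hα0, hα1⟩ hc
  have hc1 : 1 < c := by nlinarith [sq_nonneg (2*α - 1), mul_nonneg hα0.le (by linarith : (0:ℝ) ≤ 1 - α)]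
  set F : ℝ → ℝ := fun x : ℝ => x ^ α * (c + Real.sin (Real.log x)) with hF
  have hcont : ContinuousOn F (Set.Ioi 0) := fun x hx =>
    (hasDerivAt_F ⟨hα0, hα1⟩ (mem_Ioi.1 hx)).continuousAt.continuousWithinAt
  have hderiv : ∀ x ∈ Set.Ioi (0:ℝ), deriv F x
      = x ^ (α - 1) * (α * c + α * Real.sin (Real.log x) + Real.cos (Real.log x)) := fun x hx =>
    (hasDerivAt_F ⟨hα0, hα1⟩ (mem_Ioi.1 hx)).deriv
  have hpos : ∀ x > (0:ℝ), 0 < F x := by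
    intro x hx
    have hs := Real.neg_one_le_sin (Real.log x)
    have := Real.rpow_pos_of_pos hx α
    have : 0 < c + Real.sin (Real.log x) := by linarith
    positivity
  refine ⟨hpos, ?_, ?_⟩
  · refine strictMonoOn_of_deriv_pos (convex_Ioi 0) hcont ?_
    intro x hx
    rw [interior_Ioi] at hx
    rw [hderiv x hx]
    have hs := Real.neg_one_le_sin (Real.log x)
    have hcn := Real.neg_one_le_cos (Real.log x)
    have hinner : 0 < α * c + α * Real.sin (Real.log x) + Real.cos (Real.log x) := by
      nlinarith [mul_nonneg hα0.le (Real.neg_one_le_sin (Real.log x) |> neg_le_iff_add_nonneg.1)]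
    exact mul_pos (Real.rpow_pos_of_pos (mem_Ioi.1 hx) _) hinner
  · refine concaveOn_of_deriv2_nonpos (convex_Ioi 0) hcont ?_ ?_ ?_
    · rw [interior_Ioi]
      exact fun x hx => (hasDerivAt_F ⟨hα0, hα1⟩ (mem_Ioi.1 hx)).differentiableAt.differentiableWithinAt
    · rw [interior_Ioi]
      intro x hx
      have hG := hasDerivAt_G (c := c) ⟨hα0, hα1⟩ (mem_Ioi.1 hx)
      have heq : deriv F =ᶠ[nhds x] fun y =>
          y ^ (α - 1) * (α * c + α * Real.sin (Real.log y) + Real.cos (Real.log y)) := by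
        filter_upwards [isOpen_Ioi.mem_nhds hx] with y hy using hderiv y hy
      exact ((Filter.EventuallyEq.differentiableAt_iff heq).2 hG.differentiableAt).differentiableWithinAt
    · rw [interior_Ioi]
      intro x hx
      have hG := hasDerivAt_G (c := c) ⟨hα0, hα1⟩ (mem_Ioi.1 hx)
      have heq : deriv F =ᶠ[nhds x] fun y =>
          y ^ (α - 1) * (α * c + α * Real.sin (Real.log y) + Real.cos (Real.log y)) := by
        filter_upwards [isOpen_Ioi.mem_nhds hx] with y hy using hderiv y hy
      have h2 : deriv^[2] F x = x ^ (α - 2) * (α * (α - 1) * c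
          + (α ^ 2 - α - 1) * Real.sin (Real.log x) + (2 * α - 1) * Real.cos (Real.log x)) := by
        simp only [Function.iterate_succ, Function.iterate_zero, Function.comp_apply, id_eq]
        rw [heq.deriv_eq]
        exact hG.deriv
      rw [h2]
      have hs := Real.neg_one_le_sin (Real.log x); have hs' := Real.sin_le_one (Real.log x)
      have hcn := Real.neg_one_le_cos (Real.log x); have hcn' := Real.cos_le_one (Real.log x)
      have hxp : (0:ℝ) ≤ x ^ (α - 2) := (Real.rpow_pos_of_pos (mem_Ioi.1 hx) _).le
      have hinner : α * (α - 1) * c + (α ^ 2 - α - 1) * Real.sin (Real.log x)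
          + (2 * α - 1) * Real.cos (Real.log x) ≤ 0 := by
        nlinarith [mul_nonneg (by nlinarith : (0:ℝ) ≤ 1 + α - α^2) (by linarith : 0 ≤ 1 + Real.sin (Real.log x)),
          mul_nonneg (by linarith : (0:ℝ) ≤ 1 - α) (by linarith : 0 ≤ 1 + Real.cos (Real.log x)),
          mul_nonneg hα0.le (by linarith : 0 ≤ 1 - Real.cos (Real.log x))]
      exact mul_nonpos_of_nonneg_of_nonpos hxp hinner
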